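/- Let J ⊆ {1,...,n}, and for each unordered pair j < j' in J let t⁺_{jj'}, t⁻_{jj'} ∈ ℕ. Set φ(x) = ∏_{j<j'}(x_j − x_{j'})^{2t⁺_{jj'}}(x_j + x_{j'})^{2t⁻_{jj'}} and ψ(x) = ∏_{j<j'}(x_j x_{j'})^{t⁺_{jj'}+t⁻_{jj'}}. Then for every nonzero polynomial R ∈ ℂ[x_1,...,x_n] there exists a monomial x^K appearing with nonzero coefficient in R such that ⟨φ·x^K, ψ·R⟩ ≠ 0, where ⟨f,g⟩ = ∑_K K! coe(x^K,f) conj(coe(x^K,g)). -/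

import Mathlib

open MvPolynomial ComplexConjugate


/-- A nonzero multivariate polynomial with all individual degrees `< N` cannot vanish
at all points of the grid `{ζ^0, …, ζ^{N-1}}^n` for `ζ` a primitive `N`-th root of unity. -/
lemma grid_nonzero : ∀ (n : ℕ) {N : ℕ} (hN : N ≠ 0) (ζ : ℂ) (hζ : IsPrimitiveRoot ζ N)
    (W : MvPolynomial (Fin n) ℂ), W ≠ 0 → (∀ j, W.degreeOf j < N) →
    ∃ k : Fin n → Fin N, eval (fun j => ζ ^ ((k j : ℕ))) W ≠ 0 := by
  intro n
  induction n with
  | zero =>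
    intro N hN ζ hζ W hW _
    obtain ⟨a, rfl⟩ := MvPolynomial.C_surjective (Fin 0) W
    refine ⟨fun j => j.elim0, ?_⟩
    simpa using fun h => hW (by rw [h, map_zero])
  | succ n ih =>
    intro N hN ζ hζ W hW hdeg
    set q := finSuccEquiv ℂ n W with hq
    have hq0 : q ≠ 0 := by
      intro h
      apply hW
      have h2 : (finSuccEquiv ℂ n) W = (finSuccEquiv ℂ n) 0 := by
        rw [map_zero, ← hq, h]
      exact (finSuccEquiv ℂ n).injective h2
    have hlc : q.leadingCoeff ≠ 0 := Polynomial.leadingCoeff_ne_zero.mpr hq0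
    have hdeg' : ∀ j, (q.leadingCoeff).degreeOf j < N := by
      intro j
      exact lt_of_le_of_lt (MvPolynomial.degreeOf_coeff_finSuccEquiv W j q.natDegree)
        (hdeg j.succ)
    obtain ⟨a, ha⟩ := ih hN ζ hζ q.leadingCoeff hlc hdeg'
    set pt : Fin n → ℂ := fun j => ζ ^ ((a j : ℕ)) with hpt
    set u : Polynomial ℂ := q.map (eval pt) with hu
    have hu0 : u ≠ 0 := by
      intro h
      apply ha
      have : u.coeff q.natDegree = 0 := by rw [h]; simp
      rwa [hu, Polynomial.coeff_map] at this
    have hudeg : u.natDegree < N := by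
      calc u.natDegree ≤ q.natDegree := Polynomial.natDegree_map_le
      _ = W.degreeOf 0 := natDegree_finSuccEquiv W
      _ < N := hdeg 0
    -- there is c : Fin N with u.eval (ζ^c) ≠ 0
    have hc : ∃ c : Fin N, Polynomial.eval (ζ ^ ((c : ℕ))) u ≠ 0 := by
      by_contra hall
      push_neg at hall
      -- all N distinct points are roots
      have hinj : Function.Injective (fun c : Fin N => ζ ^ ((c : ℕ))) := by
        intro c c' h
        exact Fin.ext (hζ.pow_inj c.isLt c'.isLt h)
      have hsub : Finset.univ.image (fun c : Fin N => ζ ^ ((c : ℕ))) ⊆ u.roots.toFinset := by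
        intro x hx
        simp only [Finset.mem_image] at hx
        obtain ⟨c, _, rfl⟩ := hx
        rw [Multiset.mem_toFinset, Polynomial.mem_roots hu0]
        exact hall c
      have := Finset.card_le_card hsub
      rw [Finset.card_image_of_injective _ hinj, Finset.card_univ, Fintype.card_fin] at this
      have h2 : u.roots.toFinset.card ≤ u.natDegree :=
        le_trans (Multiset.toFinset_card_le _) (Polynomial.card_roots' u)
      omega
    obtain ⟨c, hc⟩ := hc
    refine ⟨Fin.cons c a, ?_⟩
    have hfun : (fun j : Fin (n+1) => ζ ^ (((Fin.cons c a : Fin (n+1) → Fin N) j : ℕ)))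
        = Fin.cons (ζ ^ ((c : ℕ))) pt := by
      funext j
      refine Fin.cases ?_ ?_ j
      · simp
      · intro i
        simp [hpt]
    rw [hfun, eval_eq_eval_mv_eval']
    exact hc

/-- orthogonality of roots of unity -/
lemma orth {N : ℕ} (hN : N ≠ 0) (ζ : ℂ) (hζ : IsPrimitiveRoot ζ N) (hζ0 : ζ ≠ 0)
    (hζ1 : ‖ζ‖ = 1) (a b : ℕ) (ha : a < N) (hb : b < N) :
    ∑ c : Fin N, (ζ ^ a * (conj ζ) ^ b) ^ ((c : ℕ)) = if a = b then (N : ℂ) else 0 := by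
  have hconj : (conj ζ) = ζ⁻¹ := (Complex.inv_eq_conj hζ1).symm
  rw [hconj]
  rcases eq_or_ne a b with rfl | hab
  · simp only [if_pos rfl]
    have h1 : ζ ^ a * (ζ⁻¹) ^ a = 1 := by
      rw [inv_pow, mul_inv_cancel₀ (pow_ne_zero _ hζ0)]
    rw [Finset.sum_congr rfl (fun c _ => by rw [h1, one_pow])]
    simp
  · rw [if_neg hab]
    have hη : ζ ^ a * (ζ⁻¹) ^ b ≠ 1 := by
      intro h
      apply hab
      apply hζ.pow_inj ha hb
      rwa [inv_pow, mul_inv_eq_one₀ (pow_ne_zero _ hζ0)] at h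
    rw [Fin.sum_univ_eq_sum_range]
    rw [geom_sum_eq hη]
    have : (ζ ^ a * (ζ⁻¹) ^ b) ^ N = 1 := by
      rw [mul_pow, ← pow_mul, ← pow_mul, mul_comm a N, mul_comm b N, pow_mul, pow_mul,
        hζ.pow_eq_one, inv_pow, hζ.pow_eq_one]
      simp
    rw [this]
    simp


lemma coeff_monmul {n : ℕ} (S L : Fin n →₀ ℕ) (p : MvPolynomial (Fin n) ℂ) :
    coeff (S + L) (monomial S (1:ℂ) * p) = coeff L p := by
  rw [coeff_monomial_mul', if_pos le_self_add, one_mul, add_tsub_cancel_left]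

-- reindexing sums over the support of `monomial S 1 * p`
lemma sum_supp_monmul {n : ℕ} (S : Fin n →₀ ℕ) (p : MvPolynomial (Fin n) ℂ)
    (F : (Fin n →₀ ℕ) → ℂ) :
    ∑ B ∈ (monomial S (1:ℂ) * p).support, F B = ∑ L ∈ p.support, F (S + L) := by
  classical
  refine Finset.sum_nbij' (fun B => B - S) (fun L => S + L) ?_ ?_ ?_ ?_ ?_
  · intro B hB
    rw [mem_support_iff, coeff_monomial_mul'] at hB
    split_ifs at hB with h
    · rw [mem_support_iff]
      simpa using hB
    · simp at hB
  · intro L hL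
    rw [mem_support_iff, coeff_monmul]
    rwa [mem_support_iff] at hL
  · intro B hB
    rw [mem_support_iff, coeff_monomial_mul'] at hB
    split_ifs at hB with h
    · exact add_tsub_cancel_of_le h
    · simp at hB
  · intro L hL
    exact add_tsub_cancel_left S L
  · intro B hB
    rw [mem_support_iff, coeff_monomial_mul'] at hB
    split_ifs at hB with h
    · rw [add_tsub_cancel_of_le h]
    · simp at hB

lemma innerW_eq_sum' (n : ℕ) (f g : MvPolynomial (Fin n) ℂ) :
    (∑ᶠ K : Fin n →₀ ℕ,
      ((∏ j, Nat.factorial (K j) : ℕ) : ℂ) * coeff K f * conj (coeff K g))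
    = ∑ A ∈ g.support,
      ((∏ j, Nat.factorial (A j) : ℕ) : ℂ) * coeff A f * conj (coeff A g) := by
  apply finsum_eq_sum_of_support_subset
  intro A hA
  simp only [Function.mem_support, ne_eq] at hA
  rw [Finset.mem_coe, mem_support_iff]
  intro h
  apply hA
  rw [h, map_zero, mul_zero]


lemma pair_id (a b : ℂ) (ha : a * conj a = 1) (hb : b * conj b = 1) (s t : ℕ) :
    (a - b) ^ (2 * s) * (a + b) ^ (2 * t) * conj ((a * b) ^ (s + t)) =
      (-1 : ℂ) ^ s * ((Complex.normSq (a - b) : ℝ) : ℂ) ^ s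
        * ((Complex.normSq (a + b) : ℝ) : ℂ) ^ t := by
  have c1 : (a - b) ^ 2 * conj (a * b) = -((Complex.normSq (a - b) : ℝ) : ℂ) := by
    rw [← Complex.mul_conj]
    simp only [map_mul, map_sub]
    linear_combination ((a - b) * conj b) * ha - ((a - b) * conj a) * hb
  have c2 : (a + b) ^ 2 * conj (a * b) = ((Complex.normSq (a + b) : ℝ) : ℂ) := by
    rw [← Complex.mul_conj]
    simp only [map_mul, map_add]
    linear_combination ((a + b) * conj b) * ha + ((a + b) * conj a) * hb
  have e : (a - b) ^ (2 * s) * (a + b) ^ (2 * t) * conj ((a * b) ^ (s + t)) =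
      ((a - b) ^ 2 * conj (a * b)) ^ s * ((a + b) ^ 2 * conj (a * b)) ^ t := by
    rw [map_pow, pow_add, pow_mul, pow_mul, mul_pow, mul_pow]
    try ring
  rw [e, c1, c2, neg_pow]

lemma prod_monomial_one {n : ℕ} (P : Finset (Fin n × Fin n)) (g : Fin n × Fin n → (Fin n →₀ ℕ)) :
    ∏ p ∈ P, monomial (g p) (1:ℂ) = monomial (∑ p ∈ P, g p) 1 := by
  classical
  induction P using Finset.induction with
  | empty => simp [monomial_zero']
  | insert _ _ h ih =>
    rw [Finset.prod_insert h, Finset.sum_insert h, ih, monomial_mul, one_mul]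

lemma parseval (n : ℕ) {N : ℕ} (hN : N ≠ 0) (ζ : ℂ) (hζ : IsPrimitiveRoot ζ N)
    (hζ0 : ζ ≠ 0) (hζ1 : ‖ζ‖ = 1) (f g : MvPolynomial (Fin n) ℂ)
    (hf : ∀ B ∈ f.support, ∀ j, B j < N) (hg : ∀ C ∈ g.support, ∀ j, C j < N) :
    ∑ k : Fin n → Fin N,
        eval (fun j => ζ ^ ((k j : ℕ))) f * conj (eval (fun j => ζ ^ ((k j : ℕ))) g)
      = (N : ℂ) ^ n * ∑ B ∈ g.support, coeff B f * conj (coeff B g) := by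
  classical
  have e1 : ∀ k : Fin n → Fin N,
      eval (fun j => ζ ^ ((k j : ℕ))) f * conj (eval (fun j => ζ ^ ((k j : ℕ))) g)
      = ∑ B ∈ f.support, ∑ C ∈ g.support,
          (coeff B f * conj (coeff C g)) * ∏ j, ((ζ ^ (B j)) * (conj ζ) ^ (C j)) ^ ((k j : ℕ)) := by
    intro k
    rw [eval_eq', eval_eq', map_sum, Finset.sum_mul_sum]
    refine Finset.sum_congr rfl (fun B _ => Finset.sum_congr rfl (fun C _ => ?_))
    simp only [map_mul, map_prod, map_pow]
    have h2 : ∀ j : Fin n, (ζ ^ ((k j : ℕ))) ^ (B j) * ((conj ζ) ^ ((k j : ℕ))) ^ (C j)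
        = ((ζ ^ (B j)) * (conj ζ) ^ (C j)) ^ ((k j : ℕ)) := by
      intro j
      rw [pow_right_comm, pow_right_comm (conj ζ), mul_pow]
    calc (coeff B f * ∏ j, (ζ ^ ((k j : ℕ))) ^ (B j))
          * (conj (coeff C g) * ∏ j, ((conj ζ) ^ ((k j : ℕ))) ^ (C j))
        = (coeff B f * conj (coeff C g)) *
          ((∏ j, (ζ ^ ((k j : ℕ))) ^ (B j)) * ∏ j, ((conj ζ) ^ ((k j : ℕ))) ^ (C j)) := by ring
      _ = _ := by
          rw [← Finset.prod_mul_distrib]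
          rw [Finset.prod_congr rfl (fun j _ => h2 j)]
  rw [Finset.sum_congr rfl (fun k _ => e1 k), Finset.sum_comm]
  rw [Finset.sum_congr rfl (fun B _ => Finset.sum_comm (γ := Fin n → Fin N))]
  have e2 : ∀ B ∈ f.support, ∀ C ∈ g.support,
      ∑ k : Fin n → Fin N, ∏ j, ((ζ ^ (B j)) * (conj ζ) ^ (C j)) ^ ((k j : ℕ))
        = if B = C then (N : ℂ) ^ n else 0 := by
    intro B hB C hC
    rw [← Fintype.prod_sum (fun j c => ((ζ ^ (B j)) * (conj ζ) ^ (C j)) ^ ((c : Fin N) : ℕ))]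
    have horth : ∀ j : Fin n, (∑ c : Fin N, ((ζ ^ (B j)) * (conj ζ) ^ (C j)) ^ ((c : ℕ)))
        = if B j = C j then (N : ℂ) else 0 :=
      fun j => orth hN ζ hζ hζ0 hζ1 (B j) (C j) (hf B hB j) (hg C hC j)
    rw [Finset.prod_congr rfl (fun j _ => horth j)]
    by_cases hBC : B = C
    · subst hBC
      simp
    · have hj : ∃ j, B j ≠ C j := by
        by_contra hall
        push_neg at hall
        exact hBC (Finsupp.ext hall)
      obtain ⟨j, hj⟩ := hj
      rw [if_neg hBC]
      exact Finset.prod_eq_zero (Finset.mem_univ j) (if_neg hj)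
  have e3 : ∀ B ∈ f.support, (∑ C ∈ g.support, ∑ k : Fin n → Fin N,
      (coeff B f * conj (coeff C g)) * ∏ j, ((ζ ^ (B j)) * (conj ζ) ^ (C j)) ^ ((k j : ℕ)))
      = if B ∈ g.support then (coeff B f * conj (coeff B g)) * (N : ℂ) ^ n else 0 := by
    intro B hB
    have : ∀ C ∈ g.support, (∑ k : Fin n → Fin N,
        (coeff B f * conj (coeff C g)) * ∏ j, ((ζ ^ (B j)) * (conj ζ) ^ (C j)) ^ ((k j : ℕ)))
        = if B = C then (coeff B f * conj (coeff C g)) * (N : ℂ) ^ n else 0 := by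
      intro C hC
      rw [← Finset.mul_sum, e2 B hB C hC]
      split_ifs with h
      · rfl
      · rw [mul_zero]
    rw [Finset.sum_congr rfl this]
    have := Finset.sum_ite_eq g.support B
      (fun C => (coeff B f * conj (coeff C g)) * (N : ℂ) ^ n)
    simpa using this
  rw [Finset.sum_congr rfl e3]
  rw [Finset.sum_ite_mem]
  rw [Finset.sum_subset (Finset.inter_subset_right)
    (fun B hB hB2 => by
      have : coeff B f = 0 := by
        by_contra hc
        exact hB2 (Finset.mem_inter.mpr ⟨mem_support_iff.mpr hc, hB⟩)
      rw [this, zero_mul, zero_mul])]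
  rw [Finset.mul_sum]
  exact Finset.sum_congr rfl (fun B _ => by ring)

lemma apply_le_totalDegree' {n : ℕ} (p : MvPolynomial (Fin n) ℂ) (B : Fin n →₀ ℕ)
    (hB : B ∈ p.support) (j : Fin n) : B j ≤ p.totalDegree := by
  refine le_trans ?_ (le_totalDegree hB)
  by_cases h : B j = 0
  · simp [h]
  · have hj : j ∈ B.support := Finsupp.mem_support_iff.mpr h
    exact Finset.single_le_sum (f := fun i => B i) (fun i _ => Nat.zero_le _) hj

lemma key {n : ℕ} (P : Finset (Fin n × Fin n)) (hP : ∀ p ∈ P, p.1 ≠ p.2)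
    (tp tm : Fin n × Fin n → ℕ) (V : MvPolynomial (Fin n) ℂ) (hV : V ≠ 0) :
    ∑ B ∈ ((∏ p ∈ P, (X p.1 * X p.2) ^ (tp p + tm p)) * V).support,
      coeff B ((∏ p ∈ P, (X p.1 - X p.2) ^ (2 * tp p) * (X p.1 + X p.2) ^ (2 * tm p)) * V) *
      conj (coeff B ((∏ p ∈ P, (X p.1 * X p.2) ^ (tp p + tm p)) * V)) ≠ 0 := by
  classical
  set f := (∏ p ∈ P, (X p.1 - X p.2) ^ (2 * tp p) * (X p.1 + X p.2) ^ (2 * tm p)) * V with hf_def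
  set g := (∏ p ∈ P, ((X p.1 : MvPolynomial (Fin n) ℂ) * X p.2) ^ (tp p + tm p)) * V with hg_def
  set Wb := V * ∏ p ∈ P, (X p.1 - X p.2) ^ (tp p) * (X p.1 + X p.2) ^ (tm p) with hWb_def
  set N := f.totalDegree + g.totalDegree + Wb.totalDegree + 1 with hN_def
  have hN : N ≠ 0 := by omega
  set ζ := Complex.exp (2 * Real.pi * Complex.I / N) with hζ_def
  have hζ : IsPrimitiveRoot ζ N := Complex.isPrimitiveRoot_exp N hN
  have hζ0 : ζ ≠ 0 := Complex.exp_ne_zero _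
  have hζ1 : ‖ζ‖ = 1 := Complex.norm_eq_one_of_pow_eq_one hζ.pow_eq_one hN
  have hunit : ∀ m : ℕ, (ζ ^ m) * conj (ζ ^ m) = 1 := by
    intro m
    rw [Complex.mul_conj]
    have : Complex.normSq ζ = 1 := by
      rw [Complex.normSq_eq_norm_sq, hζ1, one_pow]
    rw [map_pow, this, one_pow, Complex.ofReal_one]
  have hfb : ∀ B ∈ f.support, ∀ j, B j < N := fun B hB j => by
    have := apply_le_totalDegree' f B hB j; omega
  have hgb : ∀ C ∈ g.support, ∀ j, C j < N := fun C hC j => by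
    have := apply_le_totalDegree' g C hC j; omega
  -- nonvanishing of Wb
  have hWb0 : Wb ≠ 0 := by
    refine mul_ne_zero hV (Finset.prod_ne_zero_iff.mpr (fun p hp => ?_))
    have hne := hP p hp
    refine mul_ne_zero (pow_ne_zero _ ?_) (pow_ne_zero _ ?_)
    · exact sub_ne_zero.mpr (fun h => hne (X_injective h))
    · intro h
      have h2 := congrArg (coeff (Finsupp.single p.1 1)) h
      rw [coeff_add, coeff_X, coeff_X', coeff_zero] at h2
      rw [if_neg (fun h3 => hne (Finsupp.single_left_injective one_ne_zero h3).symm)] at h2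
      simp at h2
  have hWbdeg : ∀ j, Wb.degreeOf j < N := fun j => by
    have := MvPolynomial.degreeOf_le_totalDegree Wb j; omega
  obtain ⟨k0, hk0⟩ := grid_nonzero n hN ζ hζ Wb hWb0 hWbdeg
  -- per-point identity
  have hpt : ∀ k : Fin n → Fin N,
      eval (fun j => ζ ^ ((k j : ℕ))) f * conj (eval (fun j => ζ ^ ((k j : ℕ))) g)
      = (-1 : ℂ) ^ (∑ p ∈ P, tp p)
        * ((Complex.normSq (eval (fun j => ζ ^ ((k j : ℕ))) Wb) : ℝ) : ℂ) := by
    intro k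
    set ω : Fin n → ℂ := fun j => ζ ^ ((k j : ℕ)) with hω_def
    have hωu : ∀ j, ω j * conj (ω j) = 1 := fun j => hunit _
    have hA : eval ω f
        = (∏ p ∈ P, (ω p.1 - ω p.2) ^ (2 * tp p) * (ω p.1 + ω p.2) ^ (2 * tm p)) * eval ω V := by
      rw [hf_def, map_mul, map_prod]
      simp only [map_mul, map_pow, map_sub, map_add, eval_X]
    have hB : eval ω g
        = (∏ p ∈ P, (ω p.1 * ω p.2) ^ (tp p + tm p)) * eval ω V := by
      rw [hg_def, map_mul, map_prod]
      simp only [map_mul, map_pow, eval_X]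
    have hC : eval ω Wb
        = eval ω V * ∏ p ∈ P, (ω p.1 - ω p.2) ^ (tp p) * (ω p.1 + ω p.2) ^ (tm p) := by
      rw [hWb_def, map_mul, map_prod]
      simp only [map_mul, map_pow, map_sub, map_add, eval_X]
    rw [hA, hB, hC, map_mul, map_prod]
    have hprod : (∏ p ∈ P, (ω p.1 - ω p.2) ^ (2 * tp p) * (ω p.1 + ω p.2) ^ (2 * tm p))
        * (∏ p ∈ P, conj ((ω p.1 * ω p.2) ^ (tp p + tm p)))
        = (-1:ℂ) ^ (∑ p ∈ P, tp p)
          * ∏ p ∈ P, ((Complex.normSq (ω p.1 - ω p.2) : ℝ) : ℂ) ^ (tp p)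
            * ((Complex.normSq (ω p.1 + ω p.2) : ℝ) : ℂ) ^ (tm p) := by
      rw [← Finset.prod_mul_distrib]
      have hterm : ∀ p ∈ P, (ω p.1 - ω p.2) ^ (2 * tp p) * (ω p.1 + ω p.2) ^ (2 * tm p)
          * conj ((ω p.1 * ω p.2) ^ (tp p + tm p))
          = ((-1:ℂ) ^ (tp p)) * (((Complex.normSq (ω p.1 - ω p.2) : ℝ) : ℂ) ^ (tp p)
            * ((Complex.normSq (ω p.1 + ω p.2) : ℝ) : ℂ) ^ (tm p)) := by
        intro p _
        rw [pair_id (ω p.1) (ω p.2) (hωu _) (hωu _) (tp p) (tm p)]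
        ring
      rw [Finset.prod_congr rfl hterm, Finset.prod_mul_distrib, Finset.prod_pow_eq_pow_sum]
    have hns : Complex.normSq
          (eval ω V * ∏ p ∈ P, (ω p.1 - ω p.2) ^ (tp p) * (ω p.1 + ω p.2) ^ (tm p))
        = Complex.normSq (eval ω V)
          * ∏ p ∈ P, (Complex.normSq (ω p.1 - ω p.2)) ^ (tp p)
            * (Complex.normSq (ω p.1 + ω p.2)) ^ (tm p) := by
      rw [map_mul Complex.normSq, map_prod Complex.normSq]
      congr 1
      exact Finset.prod_congr rfl (fun p _ => by rw [map_mul, map_pow, map_pow])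
    calc (∏ p ∈ P, (ω p.1 - ω p.2) ^ (2 * tp p) * (ω p.1 + ω p.2) ^ (2 * tm p)) * eval ω V
          * ((∏ p ∈ P, conj ((ω p.1 * ω p.2) ^ (tp p + tm p))) * conj (eval ω V))
        = ((∏ p ∈ P, (ω p.1 - ω p.2) ^ (2 * tp p) * (ω p.1 + ω p.2) ^ (2 * tm p))
            * (∏ p ∈ P, conj ((ω p.1 * ω p.2) ^ (tp p + tm p)))) * (eval ω V * conj (eval ω V)) := by
          ring
      _ = ((-1:ℂ) ^ (∑ p ∈ P, tp p)
          * ∏ p ∈ P, ((Complex.normSq (ω p.1 - ω p.2) : ℝ) : ℂ) ^ (tp p)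
            * ((Complex.normSq (ω p.1 + ω p.2) : ℝ) : ℂ) ^ (tm p))
          * ((Complex.normSq (eval ω V) : ℝ) : ℂ) := by
          rw [hprod, Complex.mul_conj]
      _ = _ := by
          rw [hns]
          push_cast
          ring
  -- sum identity
  have hsum := parseval n hN ζ hζ hζ0 hζ1 f g hfb hgb
  rw [Finset.sum_congr rfl (fun k _ => hpt k), ← Finset.mul_sum] at hsum
  rw [show (∑ k : Fin n → Fin N, ((Complex.normSq (eval (fun j => ζ ^ ((k j : ℕ))) Wb) : ℝ) : ℂ))
      = ((∑ k : Fin n → Fin N, Complex.normSq (eval (fun j => ζ ^ ((k j : ℕ))) Wb) : ℝ) : ℂ) by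
    push_cast; ring] at hsum
  have hpos : (0:ℝ) < ∑ k : Fin n → Fin N, Complex.normSq (eval (fun j => ζ ^ ((k j : ℕ))) Wb) := by
    refine Finset.sum_pos' (fun k _ => Complex.normSq_nonneg _) ⟨k0, Finset.mem_univ _, ?_⟩
    exact Complex.normSq_pos.mpr hk0
  intro hzero
  rw [hzero, mul_zero] at hsum
  have : ((∑ k : Fin n → Fin N, Complex.normSq (eval (fun j => ζ ^ ((k j : ℕ))) Wb) : ℝ) : ℂ) ≠ 0 := by
    rw [Complex.ofReal_ne_zero]
    exact ne_of_gt hpos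
  exact mul_ne_zero (pow_ne_zero _ (neg_ne_zero.mpr (one_ne_zero : (1:ℂ) ≠ 0))) this hsum

/-- `⟨f,g⟩ = ∑_K K! coe(x^K,f) conj(coe(x^K,g))`. -/
noncomputable def innerW (n : ℕ) (f g : MvPolynomial (Fin n) ℂ) : ℂ :=
  ∑ᶠ K : Fin n →₀ ℕ,
    (∏ j, Nat.factorial (K j) : ℕ) * coeff K f * conj (coeff K g)

lemma innerW_eq_sum (n : ℕ) (f g : MvPolynomial (Fin n) ℂ) :
    innerW n f g = ∑ A ∈ g.support,
      ((∏ j, Nat.factorial (A j) : ℕ) : ℂ) * coeff A f * conj (coeff A g) := by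
  apply finsum_eq_sum_of_support_subset
  intro A hA
  simp only [Function.mem_support, ne_eq] at hA
  rw [Finset.mem_coe, mem_support_iff]
  intro h
  apply hA
  rw [h, map_zero, mul_zero]

/-- Lemma 6.3: with
`φ = ∏_{j<j'∈J} (x_j−x_{j'})^{2t⁺}(x_j+x_{j'})^{2t⁻}` and
`ψ = ∏_{j<j'∈J} (x_j x_{j'})^{t⁺+t⁻}`, every nonzero (homogeneous) `R` has a monomial
`x^K` with `⟨φ·x^K, ψ·R⟩ ≠ 0`. -/
theorem stmt13 (n d : ℕ) (J : Finset (Fin n)) (tp tm : Fin n × Fin n → ℕ)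
    (R : MvPolynomial (Fin n) ℂ) (hR : R ≠ 0)
    (hhom : R ∈ homogeneousSubmodule (Fin n) ℂ d) :
    ∃ K ∈ R.support,
      innerW n
        ((∏ p ∈ Finset.univ.filter
            (fun p : Fin n × Fin n => p.1 ∈ J ∧ p.2 ∈ J ∧ p.1 < p.2),
            (MvPolynomial.X p.1 - MvPolynomial.X p.2) ^ (2 * tp p) *
              (MvPolynomial.X p.1 + MvPolynomial.X p.2) ^ (2 * tm p)) *
          MvPolynomial.monomial K 1)
        ((∏ p ∈ Finset.univ.filter
            (fun p : Fin n × Fin n => p.1 ∈ J ∧ p.2 ∈ J ∧ p.1 < p.2),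
            (MvPolynomial.X p.1 * MvPolynomial.X p.2) ^ (tp p + tm p)) * R) ≠ 0 := by
  classical
  by_contra hcon
  push_neg at hcon
  set P := Finset.univ.filter
    (fun p : Fin n × Fin n => p.1 ∈ J ∧ p.2 ∈ J ∧ p.1 < p.2) with hP_def
  have hP : ∀ p ∈ P, p.1 ≠ p.2 := fun p hp => by
    rw [hP_def, Finset.mem_filter] at hp
    exact ne_of_lt hp.2.2.2
  set Φ := ∏ p ∈ P, ((X p.1 - X p.2 : MvPolynomial (Fin n) ℂ)) ^ (2 * tp p) * (X p.1 + X p.2) ^ (2 * tm p) with hΦ_def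
  set ψ := ∏ p ∈ P, ((X p.1 : MvPolynomial (Fin n) ℂ) * X p.2) ^ (tp p + tm p) with hψ_def
  set S : Fin n →₀ ℕ := ∑ p ∈ P,
    (Finsupp.single p.1 (tp p + tm p) + Finsupp.single p.2 (tp p + tm p)) with hS_def
  have hψm : ψ = monomial S 1 := by
    rw [hψ_def, hS_def, ← prod_monomial_one]
    refine Finset.prod_congr rfl (fun p _ => ?_)
    rw [mul_pow, X_pow_eq_monomial, X_pow_eq_monomial, monomial_mul, one_mul]
  have hΦreal : ∀ A, conj (coeff A Φ) = coeff A Φ := by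
    have hmap : MvPolynomial.map (starRingEnd ℂ) Φ = Φ := by
      rw [hΦ_def, map_prod]
      refine Finset.prod_congr rfl (fun p _ => ?_)
      simp only [map_mul, map_pow, map_sub, map_add, map_X]
    intro A
    calc conj (coeff A Φ) = coeff A (MvPolynomial.map (starRingEnd ℂ) Φ) :=
          (coeff_map _ _ _).symm
      _ = coeff A Φ := by rw [hmap]
  set v : (Fin n →₀ ℕ) → ℂ :=
    fun L => ((∏ j, Nat.factorial ((S + L) j) : ℕ) : ℂ) * conj (coeff L R) with hv_def
  set V : MvPolynomial (Fin n) ℂ := ∑ L ∈ R.support, monomial L (v L) with hV_def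
  have hVc : ∀ K, coeff K V = if K ∈ R.support then v K else 0 := by
    intro K
    rw [hV_def, coeff_sum]
    simp_rw [coeff_monomial]
    exact Finset.sum_ite_eq' R.support K v
  have hv0 : ∀ K ∈ R.support, v K ≠ 0 := by
    intro K hK
    rw [hv_def]
    refine mul_ne_zero ?_ ?_
    · exact Nat.cast_ne_zero.mpr
        (Finset.prod_ne_zero_iff.mpr (fun j _ => Nat.factorial_ne_zero _))
    · intro h
      apply mem_support_iff.mp hK
      have := congrArg conj h
      simpa using this
  have hVsupp : V.support = R.support := by
    ext K
    rw [mem_support_iff, hVc]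
    by_cases h : K ∈ R.support
    · simp [h, hv0 K h]
    · simp [h]
  have hV0 : V ≠ 0 := by
    obtain ⟨K, hK⟩ := Finset.nonempty_iff_ne_empty.mpr
      (fun h => hR (support_eq_empty.mp h))
    intro h
    have h2 := hVc K
    rw [h, coeff_zero, if_pos hK] at h2
    exact hv0 K hK h2.symm
  have hkey := key P hP tp tm V hV0
  apply hkey
  show ∑ B ∈ (ψ * V).support, coeff B (Φ * V) * conj (coeff B (ψ * V)) = 0
  have hconjv : ∀ L, conj (v L) = ((∏ j, Nat.factorial ((S + L) j) : ℕ) : ℂ) * coeff L R := by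
    intro L
    rw [hv_def]
    simp
  have lhs_eq : ∀ L : Fin n →₀ ℕ, coeff (S + L) (Φ * V)
      = ∑ K ∈ R.support, if K ≤ S + L then coeff (S + L - K) Φ * v K else 0 := by
    intro L
    rw [hV_def, Finset.mul_sum, coeff_sum]
    exact Finset.sum_congr rfl (fun K _ => coeff_mul_monomial' _ _ _ _)
  have step1 : ∑ B ∈ (ψ * V).support, coeff B (Φ * V) * conj (coeff B (ψ * V))
      = ∑ L ∈ R.support, coeff (S + L) (Φ * V) * conj (v L) := by
    rw [hψm, sum_supp_monmul S V (fun B => coeff B (Φ * V) * conj (coeff B (monomial S 1 * V))),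
      hVsupp]
    refine Finset.sum_congr rfl (fun L hL => ?_)
    rw [coeff_monmul, hVc, if_pos hL]
  have rhs_eq : ∀ K : Fin n →₀ ℕ, innerW n (Φ * monomial K 1) (ψ * R)
      = ∑ L ∈ R.support, ((∏ j, Nat.factorial ((S + L) j) : ℕ) : ℂ)
          * (if K ≤ S + L then coeff (S + L - K) Φ else 0) * conj (coeff L R) := by
    intro K
    rw [innerW_eq_sum, hψm,
      sum_supp_monmul S R (fun A => ((∏ j, Nat.factorial (A j) : ℕ) : ℂ)
        * coeff A (Φ * monomial K 1) * conj (coeff A (monomial S 1 * R)))]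
    refine Finset.sum_congr rfl (fun L hL => ?_)
    rw [coeff_monmul, coeff_mul_monomial']
    congr 1
    congr 1
    split_ifs with h
    · rw [mul_one]
    · rfl
  have step3 : ∑ L ∈ R.support, coeff (S + L) (Φ * V) * conj (v L)
      = ∑ K ∈ R.support, v K * conj (innerW n (Φ * monomial K 1) (ψ * R)) := by
    have lhs2 : (∑ L ∈ R.support, coeff (S + L) (Φ * V) * conj (v L))
        = ∑ L ∈ R.support, ∑ K ∈ R.support,
            (if K ≤ S + L then coeff (S + L - K) Φ * v K else 0)
            * (((∏ j, Nat.factorial ((S + L) j) : ℕ) : ℂ) * coeff L R) := by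
      refine Finset.sum_congr rfl (fun L hL => ?_)
      rw [lhs_eq L, hconjv L, Finset.sum_mul]
    have rhs2 : (∑ K ∈ R.support, v K * conj (innerW n (Φ * monomial K 1) (ψ * R)))
        = ∑ K ∈ R.support, ∑ L ∈ R.support,
            v K * (((∏ j, Nat.factorial ((S + L) j) : ℕ) : ℂ)
              * (if K ≤ S + L then coeff (S + L - K) Φ else 0) * coeff L R) := by
      refine Finset.sum_congr rfl (fun K hK => ?_)
      rw [rhs_eq K, map_sum, Finset.mul_sum]
      refine Finset.sum_congr rfl (fun L hL => ?_)
      congr 1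
      rw [map_mul, map_mul, apply_ite conj, hΦreal, map_zero]
      simp
    rw [lhs2, rhs2, Finset.sum_comm]
    refine Finset.sum_congr rfl (fun K _ => Finset.sum_congr rfl (fun L _ => ?_))
    split_ifs with h <;> ring
  rw [step1, step3]
  refine Finset.sum_eq_zero (fun K hK => ?_)
  rw [hcon K hK, map_zero, mul_zero]
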